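/- Let L be a binary subword-closed language with Hom(L) < ∞. Then there exists a natural number c (depending only on L) such that for every natural number n and every word w ∈ L(n), there exists a set B_w of at most c positions from {1,…,n} such that w is the only word of L(n) agreeing with w at every position of B_w; that is, for every u ∈ L(n) with u ≠ w there is a position in B_w at which u and w differ. -/

import Mathlib

/-- Binary words over the alphabet `E = {0,1}`, encoded as lists of booleans. -/
abbrev Word := List Bool

/-- A binary language `L` is subword-closed if every subsequence (sublist) of a word
of `L` belongs to `L`. -/
def SubwordClosed (L : Set Word) : Prop :=
  ∀ w ∈ L, ∀ u : Word, u.Sublist w → u ∈ L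

/-- The word `a^m ā a^m`. -/
def homWord (m : ℕ) (a : Bool) : Word :=
  List.replicate m a ++ [!a] ++ List.replicate m a

/-- The word `a^m ā^m`. -/
def hetWord (m : ℕ) (a : Bool) : Word :=
  List.replicate m a ++ List.replicate m (!a)

/-- The set `L(n)` of words of `L` of length `n`. -/
def LangAt (L : Set Word) (n : ℕ) : Set Word := {w : Word | w ∈ L ∧ w.length = n}

/-- If `L` is a binary subword-closed language with `Hom(L) < ∞`, then there is a
constant `c` (depending only on `L`) such that every word `w ∈ L(n)` is distinguished
from every other word of `L(n)` by a set `B_w` of at most `c` positions. -/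
lemma sublist_of_indices {α : Type*} (u : List α) (d : α) (J : List ℕ)
    (hJ : ∀ i ∈ J, i < u.length) (hp : J.Pairwise (· < ·)) :
    (J.map (fun i => u.getD i d)).Sublist u := by
  have hmap : (J.pmap (fun i h => (⟨i, h⟩ : Fin u.length)) hJ).map (u[·])
      = J.map (fun i => u.getD i d) := by
    clear hp
    induction J with
    | nil => simp
    | cons a l ih =>
      simp only [List.pmap, List.map_cons]
      refine congrArg₂ _ ?_ (ih _)
      exact (List.getD_eq_getElem u d (hJ a (by simp))).symm
  rw [← hmap]
  exact List.map_getElem_sublist (hp.pmap _ (fun a ha b hb h => h))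

theorem bounded_certificates (L : Set Word) (hL : SubwordClosed L)
    (hhom : ¬ ∀ m : ℕ, ∃ a : Bool, homWord m a ∈ L) :
    ∃ c : ℕ, ∀ n : ℕ, ∀ w ∈ L, w.length = n →
      ∃ B : Finset ℕ, B ⊆ Finset.range n ∧ B.card ≤ c ∧
        ∀ u ∈ L, u.length = n → u ≠ w →
          ∃ j ∈ B, u.getD j false ≠ w.getD j false := by
  push_neg at hhom
  obtain ⟨m, hm⟩ := hhom
  refine ⟨4 * m, ?_⟩
  intro n w hw hlen
  classical
  -- positions of letter `a` in `w`, as a sorted list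
  set l : Bool → List ℕ := fun a =>
    ((Finset.range n).filter (fun j => w.getD j false = a)).sort (· ≤ ·) with hldef
  have hmem : ∀ a, ∀ i, i ∈ l a ↔ (i < n ∧ w.getD i false = a) := by
    intro a i
    simp [hldef, Finset.mem_sort, Finset.mem_filter, Finset.mem_range]
  have hsorted : ∀ a, (l a).Pairwise (· < ·) := fun a => List.sortedLT_iff_pairwise.1 (Finset.sortedLT_sort _)
  -- the certificate: first m and last m positions of each letter
  set piece : Bool → List ℕ := fun a =>
    (l a).take m ++ (l a).drop ((l a).length - m) with hpiece
  set K : List ℕ := piece true ++ piece false with hK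
  refine ⟨K.toFinset, ?_, ?_, ?_⟩
  · intro i hi
    rw [List.mem_toFinset] at hi
    rw [Finset.mem_range]
    rcases List.mem_append.1 hi with h | h <;>
      rcases List.mem_append.1 h with h' | h' <;>
      first
        | exact ((hmem _ _).1 (List.take_subset _ _ h')).1
        | exact ((hmem _ _).1 (List.drop_subset _ _ h')).1
  · calc K.toFinset.card ≤ K.length := K.toFinset_card_le
      _ ≤ 4 * m := by
        simp only [hK, hpiece, List.length_append, List.length_take, List.length_drop]
        omega
  · intro u hu hulen hne
    by_contra hcon
    push_neg at hcon
    apply hne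
    apply List.ext_getElem (by rw [hulen, hlen])
    intro j hj1 hj2
    by_contra hne2
    rw [← List.getD_eq_getElem u false hj1, ← List.getD_eq_getElem w false hj2] at hne2
    -- agreement on K
    have hagree : ∀ i ∈ K, u.getD i false = w.getD i false := by
      intro i hi
      exact hcon i (List.mem_toFinset.2 hi)
    obtain ⟨a, ha⟩ : ∃ a, w.getD j false = a := ⟨_, rfl⟩
    have hpieceK : ∀ b : Bool, ∀ i ∈ piece b, i ∈ K := by
      intro b i hi
      rw [hK, List.mem_append]
      cases b
      · exact Or.inr hi
      · exact Or.inl hi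
    have hja : j ∈ l a := (hmem a j).2 ⟨by rwa [hlen] at hj2, ha⟩
    have hjK : j ∉ K := fun hK' => hne2 (hagree j hK')
    have hjp : j ∉ piece a := fun hp' => hjK (hpieceK a j hp')
    have hjtake : j ∉ (l a).take m := fun h => hjp (List.mem_append.2 (Or.inl h))
    have hjdrop : j ∉ (l a).drop ((l a).length - m) :=
      fun h => hjp (List.mem_append.2 (Or.inr h))
    -- j is in the middle: it lies in drop m and in take (len - m)
    have hjdm : j ∈ (l a).drop m := by
      rcases List.mem_append.1 ((List.take_append_drop m (l a)).symm ▸ hja) with h | h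
      · exact absurd h hjtake
      · exact h
    have hjtm : j ∈ (l a).take ((l a).length - m) := by
      rcases List.mem_append.1
          ((List.take_append_drop ((l a).length - m) (l a)).symm ▸ hja) with h | h
      · exact h
      · exact absurd h hjdrop
    have hmlen : m < (l a).length := by
      by_contra h
      push_neg at h
      rw [List.drop_eq_nil_of_le h] at hjdm
      exact absurd hjdm (List.not_mem_nil (a := j))
    -- front and back pieces
    set F : List ℕ := (l a).take m with hF
    set D : List ℕ := (l a).drop ((l a).length - m) with hD
    have hFlen : F.length = m := by simp [hF]; omega
    have hDlen : D.length = m := by simp [hD]; omega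
    -- front elements < j
    have hFlt : ∀ x ∈ F, x < j := by
      have hsp : (F ++ (l a).drop m).Pairwise (· < ·) := by
        rw [hF, List.take_append_drop]; exact hsorted a
      intro x hx
      exact (List.pairwise_append.1 hsp).2.2 x hx j hjdm
    -- back elements > j
    have hDgt : ∀ y ∈ D, j < y := by
      have hsp : ((l a).take ((l a).length - m) ++ D).Pairwise (· < ·) := by
        rw [hD, List.take_append_drop]; exact hsorted a
      intro y hy
      exact (List.pairwise_append.1 hsp).2.2 j hjtm y hy
    have hFsort : F.Pairwise (· < ·) := (hsorted a).sublist (List.take_sublist _ _)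
    have hDsort : D.Pairwise (· < ·) := (hsorted a).sublist (List.drop_sublist _ _)
    -- F and D elements are in K, carry letter a in both u and w
    have hval : ∀ i, i ∈ F ∨ i ∈ D → u.getD i false = a := by
      intro i hi
      have hila : i ∈ l a := by
        rcases hi with h | h
        · exact List.take_subset _ _ h
        · exact List.drop_subset _ _ h
      have hiK : i ∈ K := hpieceK a i (List.mem_append.2 hi)
      rw [hagree i hiK]
      exact ((hmem a i).1 hila).2
    -- the index list
    set J : List ℕ := F ++ j :: D with hJdef
    have hJlt : ∀ i ∈ J, i < u.length := by
      intro i hi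
      rw [hulen]
      rcases List.mem_append.1 hi with h | h
      · exact ((hmem a i).1 (List.take_subset _ _ h)).1
      · rcases List.mem_cons.1 h with h | h
        · subst h; rwa [hlen] at hj2
        · exact ((hmem a i).1 (List.drop_subset _ _ h)).1
    have hJpw : J.Pairwise (· < ·) := by
      rw [hJdef, List.pairwise_append]
      refine ⟨hFsort, ?_, ?_⟩
      · rw [List.pairwise_cons]
        exact ⟨hDgt, hDsort⟩
      · intro x hx y hy
        rcases List.mem_cons.1 hy with h | h
        · subst h; exact hFlt x hx
        · exact lt_trans (hFlt x hx) (hDgt y h)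
    have huj : u.getD j false = !a := by
      have h2 : ¬ u.getD j false = a := by rw [← ha]; exact hne2
      revert h2
      cases hx : u.getD j false <;> cases a <;> simp
    have hword : J.map (fun i => u.getD i false) = homWord m a := by
      rw [hJdef, homWord]
      rw [List.map_append, List.map_cons]
      have h1 : F.map (fun i => u.getD i false) = List.replicate m a := by
        apply List.eq_replicate_iff.2
        refine ⟨by rw [List.length_map, hFlen], ?_⟩
        intro b hb
        rcases List.mem_map.1 hb with ⟨i, hi, rfl⟩
        exact hval i (Or.inl hi)
      have h2 : D.map (fun i => u.getD i false) = List.replicate m a := by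
        apply List.eq_replicate_iff.2
        refine ⟨by rw [List.length_map, hDlen], ?_⟩
        intro b hb
        rcases List.mem_map.1 hb with ⟨i, hi, rfl⟩
        exact hval i (Or.inr hi)
      rw [h1, h2, huj]
      simp
    have hsub : (homWord m a).Sublist u := by
      rw [← hword]
      exact sublist_of_indices u false J hJlt hJpw
    exact hm a (hL u hu _ hsub)
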